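/- Suppose 𝒴 ⊆ L^0(Ω,𝐅_T,P) is a vector subspace containing ℝ^N_0 and NCA(𝒴) holds. Then: (1) ρ^𝒴_+(0) = 0; (2) ρ^𝒴_+ is cash additive, i.e. ρ^𝒴_+(f + c) = ρ^𝒴_+(f) + Σ_{i=1}^N c^i for every c ∈ ℝ^N and f ∈ L^0(Ω,𝐅_T,P); (3) ρ^𝒴_+ is monotone increasing for the componentwise P-a.s. order and positively homogeneous (ρ^𝒴_+(λf) = λρ^𝒴_+(f) for λ > 0); (4) ρ^𝒴_+(f) < +∞ for every f ∈ L^0(Ω,𝐅_T,P) that is bounded from above. -/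

import Mathlib

open MeasureTheory Filter Topology

namespace CollectiveArb

variable {Ω : Type*}

/-- Terminal gains `K_i` of admissible (predictable) strategies for an agent with
filtration `F`, trading the assets indexed by `A`, over times `1,…,T`. -/
def gainsSet {J : ℕ} (F : ℕ → MeasurableSpace Ω) (T : ℕ)
    (A : Finset (Fin J)) (X : Fin J → ℕ → Ω → ℝ) : Set (Ω → ℝ) :=
  { g | ∃ H : Fin J → ℕ → Ω → ℝ,
      (∀ j ∈ A, ∀ s, 1 ≤ s → s ≤ T → Measurable[F (s - 1)] (H j s)) ∧
      g = fun ω => ∑ j ∈ A, ∑ s ∈ Finset.Icc 1 T, H j s ω * (X j s ω - X j (s - 1) ω) }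

/-- No collective arbitrage for the gains sets `K` and the exchange set `Y`:
`(K₁ × ⋯ × K_N + Y) ∩ L⁰₊ = {0}`. -/
def NCA {N : ℕ} [MeasurableSpace Ω] (P : Measure Ω)
    (K : Fin N → Set (Ω → ℝ)) (Y : Set (Fin N → Ω → ℝ)) : Prop :=
  ∀ k : Fin N → Ω → ℝ, ∀ y ∈ Y, (∀ i, k i ∈ K i) →
    (∀ i, ∀ᵐ ω ∂P, 0 ≤ k i ω + y i ω) →
    ∀ i, (fun ω => k i ω + y i ω) =ᵐ[P] fun _ => (0 : ℝ)

/-- `K^𝒴 = ⨉ᵢ (Kᵢ − L⁰₊(ℱᵢ_T)) + 𝒴`. -/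
def KY {N : ℕ} [MeasurableSpace Ω] (P : Measure Ω)
    (FT : Fin N → MeasurableSpace Ω)
    (K : Fin N → Set (Ω → ℝ)) (Y : Set (Fin N → Ω → ℝ)) : Set (Fin N → Ω → ℝ) :=
  { f | ∃ (k l y : Fin N → Ω → ℝ), y ∈ Y ∧ (∀ i, k i ∈ K i) ∧
      (∀ i, Measurable[FT i] (l i) ∧ (∀ᵐ ω ∂P, 0 ≤ l i ω)) ∧
      ∀ i, f i = fun ω => k i ω - l i ω + y i ω }

/-- `ℝ^N_0`: zero-sum deterministic exchanges, viewed as constant random vectors. -/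
def zeroSum (Ω : Type*) (N : ℕ) : Set (Fin N → Ω → ℝ) :=
  { y | ∃ x : Fin N → ℝ, (∑ i, x i) = 0 ∧ ∀ i, y i = fun _ => x i }

/-- `span(ℝ^N_0, Y_1, …, Y_R)`: the finite-dimensional space of exchanges generated
by `ℝ^N_0` and the random vectors `Ys 1, …, Ys R`. -/
def spanExch {N R : ℕ} (Ys : Fin R → Fin N → Ω → ℝ) : Set (Fin N → Ω → ℝ) :=
  { y | ∃ (x : Fin N → ℝ) (c : Fin R → ℝ), (∑ i, x i) = 0 ∧
      ∀ i, y i = fun ω => x i + ∑ r, c r * Ys r i ω }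

/-- `span(𝒴₀ ∪ {g})` for a vector subspace `𝒴₀`. -/
def spanWith {N : ℕ} (Y0 : Set (Fin N → Ω → ℝ)) (g : Fin N → Ω → ℝ) :
    Set (Fin N → Ω → ℝ) :=
  { y | ∃ w ∈ Y0, ∃ c : ℝ, ∀ i, y i = fun ω => w i ω + c * g i ω }

/-- Equivalent martingale measures `Mᵢₑ` for the assets in `A`, w.r.t. the filtration `F`. -/
def martMeasures {J : ℕ} [MeasurableSpace Ω] (P : Measure Ω)
    (F : ℕ → MeasurableSpace Ω) (T : ℕ) (A : Finset (Fin J))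
    (X : Fin J → ℕ → Ω → ℝ) : Set (Measure Ω) :=
  { Q | IsProbabilityMeasure Q ∧ Q ≪ P ∧ P ≪ Q ∧
      ∀ j ∈ A, (∀ t, t ≤ T → Integrable (X j t) Q) ∧
        ∀ s t, s ≤ t → t ≤ T → X j s =ᵐ[Q] Q[X j t | F s] }

/-- Equivalent collective martingale measures `ℳₑ(𝒴)`. -/
def MeY {J N : ℕ} [MeasurableSpace Ω] (P : Measure Ω)
    (F : Fin N → ℕ → MeasurableSpace Ω) (T : ℕ) (assets : Fin N → Finset (Fin J))
    (X : Fin J → ℕ → Ω → ℝ) (Y : Set (Fin N → Ω → ℝ)) : Set (Fin N → Measure Ω) :=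
  { Q | (∀ i, Q i ∈ martMeasures P (F i) T (assets i) X) ∧
      (∀ y ∈ Y, ∀ i, Integrable (y i) (Q i)) ∧
      ∀ y ∈ Y, (∑ i, ∫ ω, y i ω ∂(Q i)) ≤ 0 }

/-- `ℳ^φ_e(𝒴) = {Q ∈ ℳₑ(𝒴) : E_{Qⁱ}[|φⁱ|] < ∞ ∀ i}`. -/
def MeYphi {J N : ℕ} [MeasurableSpace Ω] (P : Measure Ω)
    (F : Fin N → ℕ → MeasurableSpace Ω) (T : ℕ) (assets : Fin N → Finset (Fin J))
    (X : Fin J → ℕ → Ω → ℝ) (Y : Set (Fin N → Ω → ℝ))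
    (φ : Fin N → Ω → ℝ) : Set (Fin N → Measure Ω) :=
  { Q | Q ∈ MeY P F T assets X Y ∧ ∀ i, Integrable (φ i) (Q i) }

/-- Closedness of a set of random vectors under componentwise `P`-a.s. convergence
of sequences (within `L⁰(Ω, 𝐅_T, P)`). -/
def ClosedAS {N : ℕ} [MeasurableSpace Ω] (P : Measure Ω)
    (FT : Fin N → MeasurableSpace Ω) (S : Set (Fin N → Ω → ℝ)) : Prop :=
  ∀ (f : ℕ → Fin N → Ω → ℝ) (g : Fin N → Ω → ℝ),
    (∀ n, f n ∈ S) → (∀ i, Measurable[FT i] (g i)) →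
    (∀ i, ∀ᵐ ω ∂P, Tendsto (fun n => f n i ω) atTop (𝓝 (g i ω))) →
    g ∈ S

/-- Collective superhedging price `ρ^𝒴₊(f)` (with `inf ∅ = +∞`). -/
noncomputable def rhoPlus {N : ℕ} [MeasurableSpace Ω] (P : Measure Ω)
    (K : Fin N → Set (Ω → ℝ)) (Y : Set (Fin N → Ω → ℝ))
    (f : Fin N → Ω → ℝ) : EReal :=
  sInf { z : EReal | ∃ m : Fin N → ℝ, z = ((∑ i, m i : ℝ) : EReal) ∧
      ∃ k : Fin N → Ω → ℝ, (∀ i, k i ∈ K i) ∧ ∃ y ∈ Y,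
        ∀ i, ∀ᵐ ω ∂P, f i ω ≤ m i + k i ω + y i ω }

/-- Collective subhedging price `ρ^𝒴₋(f)` (with `sup ∅ = −∞`). -/
noncomputable def rhoMinus {N : ℕ} [MeasurableSpace Ω] (P : Measure Ω)
    (K : Fin N → Set (Ω → ℝ)) (Y : Set (Fin N → Ω → ℝ))
    (f : Fin N → Ω → ℝ) : EReal :=
  sSup { z : EReal | ∃ m : Fin N → ℝ, z = ((∑ i, m i : ℝ) : EReal) ∧
      ∃ k : Fin N → Ω → ℝ, (∀ i, k i ∈ K i) ∧ ∃ y ∈ Y,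
        ∀ i, ∀ᵐ ω ∂P, m i + k i ω - y i ω ≤ f i ω }

/-- `ρ^𝒴₊(f)` is attained. -/
def rhoPlusAttained {N : ℕ} [MeasurableSpace Ω] (P : Measure Ω)
    (K : Fin N → Set (Ω → ℝ)) (Y : Set (Fin N → Ω → ℝ))
    (f : Fin N → Ω → ℝ) : Prop :=
  ∃ (m : Fin N → ℝ) (k y : Fin N → Ω → ℝ), y ∈ Y ∧ (∀ i, k i ∈ K i) ∧
    (∀ i, ∀ᵐ ω ∂P, f i ω ≤ m i + k i ω + y i ω) ∧
    rhoPlus P K Y f = ((∑ i, m i : ℝ) : EReal)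

/-- `ρ^𝒴₋(f)` is attained. -/
def rhoMinusAttained {N : ℕ} [MeasurableSpace Ω] (P : Measure Ω)
    (K : Fin N → Set (Ω → ℝ)) (Y : Set (Fin N → Ω → ℝ))
    (f : Fin N → Ω → ℝ) : Prop :=
  ∃ (m : Fin N → ℝ) (k y : Fin N → Ω → ℝ), y ∈ Y ∧ (∀ i, k i ∈ K i) ∧
    (∀ i, ∀ᵐ ω ∂P, m i + k i ω - y i ω ≤ f i ω) ∧
    rhoMinus P K Y f = ((∑ i, m i : ℝ) : EReal)

/-- `f` is `𝒴`-collectively replicable: `f ∈ ℝ^N + (K₁ × ⋯ × K_N) + 𝒴` in `L⁰`. -/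
def Replicable {N : ℕ} [MeasurableSpace Ω] (P : Measure Ω)
    (K : Fin N → Set (Ω → ℝ)) (Y : Set (Fin N → Ω → ℝ))
    (f : Fin N → Ω → ℝ) : Prop :=
  ∃ (m : Fin N → ℝ) (k y : Fin N → Ω → ℝ), y ∈ Y ∧ (∀ i, k i ∈ K i) ∧
    ∀ i, f i =ᵐ[P] fun ω => m i + k i ω + y i ω



section AuxLemmas

variable {Ω : Type*}

lemma zero_mem_gainsSet {J : ℕ} (F : ℕ → MeasurableSpace Ω) (T : ℕ)
    (A : Finset (Fin J)) (X : Fin J → ℕ → Ω → ℝ) :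
    (fun _ : Ω => (0 : ℝ)) ∈ gainsSet F T A X := by
  refine ⟨fun _ _ _ => 0, fun j hj s h1 h2 => measurable_const, ?_⟩
  funext ω; simp

lemma smul_mem_gainsSet {J : ℕ} {F : ℕ → MeasurableSpace Ω} {T : ℕ}
    {A : Finset (Fin J)} {X : Fin J → ℕ → Ω → ℝ} {k : Ω → ℝ} (c : ℝ)
    (hk : k ∈ gainsSet F T A X) : (fun ω => c * k ω) ∈ gainsSet F T A X := by
  obtain ⟨H, hH, hg⟩ := hk
  refine ⟨fun j s ω => c * H j s ω, fun j hj s h1 h2 => (hH j hj s h1 h2).const_mul c, ?_⟩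
  funext ω; rw [hg]
  simp [Finset.mul_sum, mul_assoc]

end AuxLemmas

/-- basic properties of the collective superhedging price (Lemma lemmarho, Items 1-4). -/
theorem rhoPlus_basic_properties
    {Ω : Type*} [m0 : MeasurableSpace Ω]
    (P : Measure Ω) [IsProbabilityMeasure P]
    (T J N : ℕ) (hT : 1 ≤ T) (hJ : 1 ≤ J) (hN : 1 ≤ N)
    (F : Fin N → ℕ → MeasurableSpace Ω)
    (hFmono : ∀ i, Monotone (F i))
    (hFle : ∀ i t, F i t ≤ m0)
    (hFzero : ∀ i, ∀ A : Set Ω, MeasurableSet[F i 0] A → P A = 0 ∨ P A = 1)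
    (X : Fin J → ℕ → Ω → ℝ)
    (assets : Fin N → Finset (Fin J))
    (hassets : ∀ i, (assets i).Nonempty)
    (hcover : ∀ j, ∃ i, j ∈ assets i)
    (hadapted : ∀ i, ∀ j ∈ assets i, ∀ t, t ≤ T → Measurable[F i t] (X j t))
    (𝒴 : Set (Fin N → Ω → ℝ))
    (h𝒴meas : ∀ y ∈ 𝒴, ∀ i, Measurable[F i T] (y i))
    (h𝒴R0 : zeroSum Ω N ⊆ 𝒴)
    (h𝒴add : ∀ y ∈ 𝒴, ∀ z ∈ 𝒴, (fun i ω => y i ω + z i ω) ∈ 𝒴)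
    (h𝒴smul : ∀ y ∈ 𝒴, ∀ c : ℝ, (fun i ω => c * y i ω) ∈ 𝒴)
    (hNCA : NCA P (fun i => gainsSet (F i) T (assets i) X) 𝒴) :
    -- (1) `ρ^𝒴₊(0) = 0`
    rhoPlus P (fun i => gainsSet (F i) T (assets i) X) 𝒴 (fun _ _ => 0) = (0 : EReal) ∧
    -- (2) cash additivity
    (∀ f : Fin N → Ω → ℝ, (∀ i, Measurable[F i T] (f i)) → ∀ c : Fin N → ℝ,
      rhoPlus P (fun i => gainsSet (F i) T (assets i) X) 𝒴 (fun i ω => f i ω + c i)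
        = rhoPlus P (fun i => gainsSet (F i) T (assets i) X) 𝒴 f + ((∑ i, c i : ℝ) : EReal)) ∧
    -- (3a) monotonicity
    (∀ f g : Fin N → Ω → ℝ, (∀ i, Measurable[F i T] (f i)) → (∀ i, Measurable[F i T] (g i)) →
      (∀ i, ∀ᵐ ω ∂P, f i ω ≤ g i ω) →
      rhoPlus P (fun i => gainsSet (F i) T (assets i) X) 𝒴 f
        ≤ rhoPlus P (fun i => gainsSet (F i) T (assets i) X) 𝒴 g) ∧
    -- (3b) positive homogeneity
    (∀ f : Fin N → Ω → ℝ, (∀ i, Measurable[F i T] (f i)) → ∀ lam : ℝ, 0 < lam →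
      rhoPlus P (fun i => gainsSet (F i) T (assets i) X) 𝒴 (fun i ω => lam * f i ω)
        = ((lam : ℝ) : EReal) * rhoPlus P (fun i => gainsSet (F i) T (assets i) X) 𝒴 f) ∧
    -- (4) finiteness on claims bounded from above
    (∀ f : Fin N → Ω → ℝ, (∀ i, Measurable[F i T] (f i)) →
      (∃ C : Fin N → ℝ, ∀ i, ∀ᵐ ω ∂P, f i ω ≤ C i) →
      rhoPlus P (fun i => gainsSet (F i) T (assets i) X) 𝒴 f < ⊤) := by
  classical
  set K : Fin N → Set (Ω → ℝ) := fun i => gainsSet (F i) T (assets i) X with hK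
  have hK0 : ∀ i, (fun _ : Ω => (0 : ℝ)) ∈ K i := fun i => zero_mem_gainsSet _ _ _ _
  have hY0 : (fun (_ : Fin N) (_ : Ω) => (0 : ℝ)) ∈ 𝒴 :=
    h𝒴R0 ⟨fun _ => 0, by simp, fun i => rfl⟩
  -- the superhedging value set
  set S : (Fin N → Ω → ℝ) → Set EReal := fun f =>
    { z : EReal | ∃ m : Fin N → ℝ, z = ((∑ i, m i : ℝ) : EReal) ∧
      ∃ k : Fin N → Ω → ℝ, (∀ i, k i ∈ K i) ∧ ∃ y ∈ 𝒴,
        ∀ i, ∀ᵐ ω ∂P, f i ω ≤ m i + k i ω + y i ω } with hS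
  have hrho : ∀ f, rhoPlus P K 𝒴 f = sInf (S f) := fun f => rfl
  -- the shift inequality
  have hshift : ∀ (f : Fin N → Ω → ℝ) (c : Fin N → ℝ),
      rhoPlus P K 𝒴 (fun i ω => f i ω + c i) ≤ rhoPlus P K 𝒴 f + ((∑ i, c i : ℝ) : EReal) := by
    intro f c
    rw [hrho, hrho,
      ← EReal.sub_le_iff_le_add (Or.inl (EReal.coe_ne_bot _)) (Or.inl (EReal.coe_ne_top _))]
    refine le_sInf fun z hz => ?_
    obtain ⟨m, rfl, k, hk, y, hy, hsup⟩ := hz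
    refine EReal.sub_le_of_le_add ?_
    rw [← EReal.coe_add]
    refine sInf_le ⟨fun i => m i + c i, ?_, k, hk, y, hy,
      fun i => (hsup i).mono fun ω h => by dsimp only; linarith⟩
    exact congrArg Real.toEReal Finset.sum_add_distrib.symm
  -- the scaling inequality
  have hscale : ∀ (f : Fin N → Ω → ℝ) (lam : ℝ), 0 < lam →
      rhoPlus P K 𝒴 (fun i ω => lam * f i ω) ≤ ((lam : ℝ) : EReal) * rhoPlus P K 𝒴 f := by
    intro f lam hlam
    have key : ((lam⁻¹ : ℝ) : EReal) * rhoPlus P K 𝒴 (fun i ω => lam * f i ω)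
        ≤ rhoPlus P K 𝒴 f := by
      rw [hrho, hrho]
      refine le_sInf fun z hz => ?_
      obtain ⟨m, rfl, k, hk, y, hy, hsup⟩ := hz
      have hmem : ((∑ i, lam * m i : ℝ) : EReal) ∈ S (fun i ω => lam * f i ω) := by
        refine ⟨fun i => lam * m i, rfl, fun i ω => lam * k i ω,
          fun i => smul_mem_gainsSet lam (hk i), fun i ω => lam * y i ω,
          h𝒴smul y hy lam, fun i => (hsup i).mono fun ω h => ?_⟩
        dsimp only
        nlinarith [mul_le_mul_of_nonneg_left h hlam.le]
      have h1 : sInf (S (fun i ω => lam * f i ω)) ≤ ((∑ i, lam * m i : ℝ) : EReal) :=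
        sInf_le hmem
      calc ((lam⁻¹ : ℝ) : EReal) * sInf (S (fun i ω => lam * f i ω))
          ≤ ((lam⁻¹ : ℝ) : EReal) * ((∑ i, lam * m i : ℝ) : EReal) :=
            mul_le_mul_of_nonneg_left h1 (by exact_mod_cast inv_nonneg.2 hlam.le)
        _ = ((∑ i, m i : ℝ) : EReal) := by
            rw [← EReal.coe_mul]
            congr 1
            rw [← Finset.mul_sum, ← mul_assoc, inv_mul_cancel₀ hlam.ne', one_mul]
    calc rhoPlus P K 𝒴 (fun i ω => lam * f i ω)
        = ((lam : ℝ) : EReal) * (((lam⁻¹ : ℝ) : EReal)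
            * rhoPlus P K 𝒴 (fun i ω => lam * f i ω)) := by
          rw [← mul_assoc, ← EReal.coe_mul, mul_inv_cancel₀ hlam.ne']
          simp
      _ ≤ ((lam : ℝ) : EReal) * rhoPlus P K 𝒴 f :=
          mul_le_mul_of_nonneg_left key (by exact_mod_cast hlam.le)
  refine ⟨?_, ?_, ?_, ?_, ?_⟩
  · -- (1)
    rw [hrho]
    refine le_antisymm ?_ ?_
    · have hmem : ((∑ i : Fin N, (0 : ℝ) : ℝ) : EReal) ∈ S (fun _ _ => 0) :=
        ⟨fun _ => 0, rfl, fun _ _ => 0, hK0, fun _ _ => 0, hY0,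
          fun i => Filter.Eventually.of_forall fun ω => by norm_num⟩
      have := sInf_le hmem
      simpa using this
    · refine le_sInf fun z hz => ?_
      obtain ⟨m, rfl, k, hk, y, hy, hsup⟩ := hz
      have hsum : (0 : ℝ) ≤ ∑ i, m i := by
        by_contra hs
        push_neg at hs
        set s : ℝ := ∑ i, m i with hsdef
        have hNpos : (0 : ℝ) < (N : ℝ) := by exact_mod_cast hN
        have hsN : s / N < 0 := div_neg_of_neg_of_pos hs hNpos
        -- construct the zero-sum exchange
        have hx : (fun (i : Fin N) (_ : Ω) => m i - s / N) ∈ 𝒴 := by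
          refine h𝒴R0 ⟨fun i => m i - s / N, ?_, fun i => rfl⟩
          rw [Finset.sum_sub_distrib, Finset.sum_const, Finset.card_univ, Fintype.card_fin,
            nsmul_eq_mul]
          field_simp
          linarith [hsdef]
        have hy' : (fun i ω => (m i - s / N) + y i ω) ∈ 𝒴 := h𝒴add _ hx y hy
        have hnn : ∀ i, ∀ᵐ ω ∂P, 0 ≤ k i ω + ((m i - s / N) + y i ω) := fun i =>
          (hsup i).mono fun ω h => by dsimp only at h ⊢; linarith
        have heq := hNCA k _ hy' hk hnn ⟨0, hN⟩
        have hane : (MeasureTheory.ae P).NeBot :=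
          MeasureTheory.ae_neBot.2 (IsProbabilityMeasure.ne_zero P)
        obtain ⟨ω, h1ω, h2ω⟩ := (heq.and (hsup ⟨0, hN⟩)).exists
        dsimp only at h1ω h2ω
        linarith
      exact_mod_cast hsum
  · -- (2) cash additivity
    intro f hf c
    refine le_antisymm (hshift f c) ?_
    have h2 := hshift (fun i ω => f i ω + c i) (fun i => -c i)
    have hfe : (fun i ω => (fun i ω => f i ω + c i) i ω + (fun i => -c i) i) = f := by
      funext i ω; dsimp only; ring
    rw [hfe] at h2
    have hsumneg : (∑ i, (fun i => -c i) i : ℝ) = -(∑ i, c i) := by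
      simp
    rw [hsumneg] at h2
    calc rhoPlus P K 𝒴 f + ((∑ i, c i : ℝ) : EReal)
        ≤ (rhoPlus P K 𝒴 (fun i ω => f i ω + c i) + ((-(∑ i, c i) : ℝ) : EReal))
            + ((∑ i, c i : ℝ) : EReal) := add_le_add_left h2 _
      _ = rhoPlus P K 𝒴 (fun i ω => f i ω + c i) := by
          rw [add_assoc, ← EReal.coe_add]
          norm_num
  · -- (3a) monotonicity
    intro f g hf hg hle
    rw [hrho, hrho]
    refine sInf_le_sInf fun z hz => ?_
    obtain ⟨m, rfl, k, hk, y, hy, hsup⟩ := hz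
    exact ⟨m, rfl, k, hk, y, hy, fun i => ((hle i).and (hsup i)).mono fun ω h => h.1.trans h.2⟩
  · -- (3b) positive homogeneity
    intro f hf lam hlam
    refine le_antisymm (hscale f lam hlam) ?_
    have h2 := hscale (fun i ω => lam * f i ω) lam⁻¹ (inv_pos.2 hlam)
    have hfe : (fun i ω => lam⁻¹ * ((fun i ω => lam * f i ω) i ω)) = f := by
      funext i ω; dsimp only; field_simp
    rw [hfe] at h2
    calc ((lam : ℝ) : EReal) * rhoPlus P K 𝒴 f
        ≤ ((lam : ℝ) : EReal) * (((lam⁻¹ : ℝ) : EReal)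
            * rhoPlus P K 𝒴 (fun i ω => lam * f i ω)) :=
          mul_le_mul_of_nonneg_left h2 (by exact_mod_cast hlam.le)
      _ = rhoPlus P K 𝒴 (fun i ω => lam * f i ω) := by
          rw [← mul_assoc, ← EReal.coe_mul, mul_inv_cancel₀ hlam.ne']
          simp
  · -- (4) finiteness
    intro f hf ⟨C, hC⟩
    have hmem : ((∑ i, C i : ℝ) : EReal) ∈ S f :=
      ⟨C, rfl, fun _ _ => 0, hK0, fun _ _ => 0, hY0,
        fun i => (hC i).mono fun ω h => by dsimp only; linarith⟩
    exact lt_of_le_of_lt (sInf_le hmem) (EReal.coe_lt_top _)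


end CollectiveArb
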